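/- Let H : ℝ³ → ℝ³ be a twice continuously differentiable vector field with div H = 0 and curl H = 0 everywhere, and let k > 0. Then the potential U(x) = -k‖H(x)‖² satisfies ΔU(x) = -2k‖DH(x)‖_F² at every point x, where DH(x) is the (total) derivative of H at x and ‖·‖_F is the Frobenius norm; in particular ΔU(x) ≤ 0 for all x. -/

import Mathlib

local notation "E3" => EuclideanSpace ℝ (Fin 3)

/-- Partial derivative of a scalar field on `ℝ³` in the `i`-th coordinate direction. -/
noncomputable def pderiv3 (i : Fin 3) (f : EuclideanSpace ℝ (Fin 3) → ℝ)
    (x : EuclideanSpace ℝ (Fin 3)) : ℝ :=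
  fderiv ℝ f x (EuclideanSpace.single i 1)

/-- Laplacian of a scalar field on `ℝ³`: sum of the second partials. -/
noncomputable def laplacian3 (f : EuclideanSpace ℝ (Fin 3) → ℝ)
    (x : EuclideanSpace ℝ (Fin 3)) : ℝ :=
  ∑ i : Fin 3, pderiv3 i (pderiv3 i f) x

/-- Divergence of a vector field on `ℝ³`. -/
noncomputable def div3 (H : EuclideanSpace ℝ (Fin 3) → EuclideanSpace ℝ (Fin 3))
    (x : EuclideanSpace ℝ (Fin 3)) : ℝ :=
  ∑ i : Fin 3, pderiv3 i (fun y => H y i) x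

/-- Curl of a vector field on `ℝ³`, componentwise. -/
noncomputable def curl3 (H : EuclideanSpace ℝ (Fin 3) → EuclideanSpace ℝ (Fin 3))
    (x : EuclideanSpace ℝ (Fin 3)) : Fin 3 → ℝ :=
  ![pderiv3 1 (fun y => H y 2) x - pderiv3 2 (fun y => H y 1) x,
    pderiv3 2 (fun y => H y 0) x - pderiv3 0 (fun y => H y 2) x,
    pderiv3 0 (fun y => H y 1) x - pderiv3 1 (fun y => H y 0) x]

/-- Squared Frobenius norm of the derivative of a vector field on `ℝ³`:
the sum of the squares of all first partial derivatives of its components. -/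
noncomputable def frobSqDeriv3 (H : EuclideanSpace ℝ (Fin 3) → EuclideanSpace ℝ (Fin 3))
    (x : EuclideanSpace ℝ (Fin 3)) : ℝ :=
  ∑ i : Fin 3, ∑ j : Fin 3, (pderiv3 i (fun y => H y j) x) ^ 2

lemma pd_const_mul (i : Fin 3) (c : ℝ) {f : E3 → ℝ} {x : E3} (hf : DifferentiableAt ℝ f x) :
    pderiv3 i (fun y => c * f y) x = c * pderiv3 i f x := by
  unfold pderiv3
  rw [fderiv_const_mul hf]
  simp

lemma pd_mul (i : Fin 3) {f g : E3 → ℝ} {x : E3} (hf : DifferentiableAt ℝ f x)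
    (hg : DifferentiableAt ℝ g x) :
    pderiv3 i (fun y => f y * g y) x = pderiv3 i f x * g x + f x * pderiv3 i g x := by
  unfold pderiv3
  rw [fderiv_fun_mul hf hg]
  simp [smul_eq_mul]
  ring

lemma pd_sum (i : Fin 3) {ι : Type*} (u : Finset ι) {f : ι → E3 → ℝ} {x : E3}
    (hf : ∀ j ∈ u, DifferentiableAt ℝ (f j) x) :
    pderiv3 i (fun y => ∑ j ∈ u, f j y) x = ∑ j ∈ u, pderiv3 i (f j) x := by
  unfold pderiv3
  rw [fderiv_fun_sum hf]
  simp

lemma pd_schwarz (i l : Fin 3) {f : E3 → ℝ} (hf : ContDiff ℝ 2 f) (x : E3) :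
    pderiv3 i (pderiv3 l f) x = pderiv3 l (pderiv3 i f) x := by
  have hdf : Differentiable ℝ (fderiv ℝ f) :=
    (hf.fderiv_right (m := 1) le_rfl).differentiable one_ne_zero
  have key : ∀ v w : E3, fderiv ℝ (fun y => fderiv ℝ f y v) x w
      = fderiv ℝ (fderiv ℝ f) x w v := by
    intro v w
    rw [fderiv_clm_apply (hdf x) (differentiableAt_const v)]
    simp
  unfold pderiv3
  rw [key, key, hf.contDiffAt.isSymmSndFDerivAt (by simp)]

/-- **Earnshaw-type Laplacian identity.**  If `H` is a `C²` divergence-free and curl-free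
vector field on `ℝ³` and `k > 0`, then the potential `U = -k‖H‖²` satisfies
`ΔU = -2k‖DH‖_F²` everywhere; in particular `ΔU ≤ 0`. -/
theorem stmt0 (H : EuclideanSpace ℝ (Fin 3) → EuclideanSpace ℝ (Fin 3))
    (hH : ContDiff ℝ 2 H) (k : ℝ) (hk : 0 < k)
    (hdiv : ∀ x, div3 H x = 0) (hcurl : ∀ x, curl3 H x = 0) :
    ∀ x, laplacian3 (fun y => -k * ‖H y‖ ^ 2) x = -2 * k * frobSqDeriv3 H x ∧
      laplacian3 (fun y => -k * ‖H y‖ ^ 2) x ≤ 0 := by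
  have hHc : ∀ j : Fin 3, ContDiff ℝ 2 (fun y => H y j) := fun j =>
    (EuclideanSpace.proj (𝕜 := ℝ) j).contDiff.comp hH
  have dHc : ∀ j : Fin 3, Differentiable ℝ (fun y => H y j) := fun j =>
    (hHc j).differentiable two_ne_zero
  have hD : ∀ i j : Fin 3, ContDiff ℝ 1 (pderiv3 i (fun y => H y j)) := fun i j =>
    ((hHc j).fderiv_right (m := 1) le_rfl).clm_apply contDiff_const
  have dD : ∀ i j : Fin 3, Differentiable ℝ (pderiv3 i (fun y => H y j)) := fun i j =>
    (hD i j).differentiable one_ne_zero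
  -- curl-free : symmetry of the Jacobian
  have Dsym : ∀ i j : Fin 3, pderiv3 i (fun y => H y j) = pderiv3 j (fun y => H y i) := by
    intro i j; funext y
    have h0 := congrFun (hcurl y) 0
    have h1 := congrFun (hcurl y) 1
    have h2 := congrFun (hcurl y) 2
    simp [curl3, sub_eq_zero] at h0 h1 h2
    fin_cases i <;> fin_cases j <;> simp_all
  -- each component is harmonic
  have harm : ∀ (j : Fin 3) (x : E3),
      ∑ i : Fin 3, pderiv3 i (pderiv3 i (fun y => H y j)) x = 0 := by
    intro j x
    have step : ∀ i : Fin 3, pderiv3 i (pderiv3 i (fun y => H y j)) x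
        = pderiv3 j (pderiv3 i (fun y => H y i)) x := by
      intro i
      rw [Dsym i j]
      exact pd_schwarz i j (hHc i) x
    rw [Finset.sum_congr rfl (fun i _ => step i)]
    rw [← pd_sum j Finset.univ (fun i _ => (dD i i x))]
    have hz : (fun y => ∑ i : Fin 3, pderiv3 i (fun y' => H y' i) y)
        = fun _ => (0 : ℝ) := by
      funext y; exact hdiv y
    rw [hz]
    unfold pderiv3
    simp
  -- rewrite the potential as a sum of squares
  have normsq : (fun y => -k * ‖H y‖ ^ 2) = fun y => ∑ j : Fin 3, -k * (H y j * H y j) := by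
    funext y
    rw [← Finset.mul_sum]
    congr 1
    rw [EuclideanSpace.norm_eq, Real.sq_sqrt (by positivity)]
    exact Finset.sum_congr rfl fun j _ => by
      rw [Real.norm_eq_abs, sq_abs, sq]
  have dterm : ∀ j : Fin 3, Differentiable ℝ (fun y => -k * (H y j * H y j)) := fun j =>
    ((dHc j).mul (dHc j)).const_mul _
  -- first derivative
  have pdU : ∀ i : Fin 3, pderiv3 i (fun y => -k * ‖H y‖ ^ 2)
      = fun x => ∑ j : Fin 3, (-2 * k) * (H x j * pderiv3 i (fun y => H y j) x) := by
    intro i; funext x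
    rw [normsq, pd_sum i Finset.univ (fun j _ => (dterm j x))]
    refine Finset.sum_congr rfl fun j _ => ?_
    rw [pd_const_mul i (-k) ((dHc j x).fun_mul (dHc j x)), pd_mul i (dHc j x) (dHc j x)]
    ring
  intro x
  -- second derivative
  have pdd : ∀ i : Fin 3, pderiv3 i (pderiv3 i (fun y => -k * ‖H y‖ ^ 2)) x
      = ∑ j : Fin 3, ((-2 * k) * (pderiv3 i (fun y => H y j) x) ^ 2
          + (-2 * k) * H x j * pderiv3 i (pderiv3 i (fun y => H y j)) x) := by
    intro i
    rw [pdU i, pd_sum i Finset.univ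
      (fun j _ => (((dHc j).fun_mul (dD i j)).const_mul (-2 * k)) x)]
    refine Finset.sum_congr rfl fun j _ => ?_
    rw [pd_const_mul i (-2 * k) (((dHc j).fun_mul (dD i j)) x),
      pd_mul i (dHc j x) (dD i j x)]
    ring
  have main : laplacian3 (fun y => -k * ‖H y‖ ^ 2) x = -2 * k * frobSqDeriv3 H x := by
    unfold laplacian3 frobSqDeriv3
    calc ∑ i : Fin 3, pderiv3 i (pderiv3 i (fun y => -k * ‖H y‖ ^ 2)) x
        = ∑ i : Fin 3, ∑ j : Fin 3, ((-2 * k) * (pderiv3 i (fun y => H y j) x) ^ 2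
            + (-2 * k) * H x j * pderiv3 i (pderiv3 i (fun y => H y j)) x) :=
          Finset.sum_congr rfl fun i _ => pdd i
      _ = (∑ i : Fin 3, ∑ j : Fin 3, (-2 * k) * (pderiv3 i (fun y => H y j) x) ^ 2)
          + ∑ j : Fin 3, (-2 * k) * H x j
              * ∑ i : Fin 3, pderiv3 i (pderiv3 i (fun y => H y j)) x := by
          simp only [Finset.sum_add_distrib, Finset.mul_sum]
          congr 1
          exact Finset.sum_comm
      _ = -2 * k * ∑ i : Fin 3, ∑ j : Fin 3, (pderiv3 i (fun y => H y j) x) ^ 2 := by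
          simp [harm, Finset.mul_sum]
  refine ⟨main, ?_⟩
  rw [main]
  have hfr : 0 ≤ frobSqDeriv3 H x := by
    unfold frobSqDeriv3
    positivity
  nlinarith
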